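/- Let G be an ample groupoid and R a commutative ring with unit. If G has an R-dense orbit O_x such that the isotropy group algebra RG_x is a prime ring, then the convolution algebra RG is a prime ring. -/

import Mathlib

universe u

/-- An étale topological groupoid: arrows form a topological space, units are
identified with idempotent arrows via the domain map `d` and range map `r`;
the domain map is a local homeomorphism. -/
structure EtaleGroupoid : Type (u + 1) where
  Arr : Type u
  top : TopologicalSpace Arr
  d : Arr → Arr
  r : Arr → Arr
  comp : Arr → Arr → Arr
  inv : Arr → Arr
  d_d : ∀ g, d (d g) = d g
  r_d : ∀ g, r (d g) = d g
  d_r : ∀ g, d (r g) = r g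
  r_r : ∀ g, r (r g) = r g
  d_comp : ∀ g h, d g = r h → d (comp g h) = d h
  r_comp : ∀ g h, d g = r h → r (comp g h) = r g
  comp_assoc : ∀ g h k, d g = r h → d h = r k → comp (comp g h) k = comp g (comp h k)
  comp_unit_right : ∀ g, comp g (d g) = g
  comp_unit_left : ∀ g, comp (r g) g = g
  d_inv : ∀ g, d (inv g) = r g
  r_inv : ∀ g, r (inv g) = d g
  inv_inv : ∀ g, inv (inv g) = g
  inv_comp : ∀ g, comp (inv g) g = d g
  comp_inv : ∀ g, comp g (inv g) = r g
  continuous_d : @Continuous Arr Arr top top d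
  continuous_r : @Continuous Arr Arr top top r
  continuous_inv : @Continuous Arr Arr top top inv
  continuous_comp : @Continuous {p : Arr × Arr // d p.1 = r p.2} Arr
    (@instTopologicalSpaceSubtype _ _ (@instTopologicalSpaceProd _ _ top top)) top
    (fun p => comp p.val.1 p.val.2)
  etale : ∀ g : Arr, ∃ U : Set Arr, @IsOpen Arr top U ∧ g ∈ U ∧ Set.InjOn d U ∧
    ∀ V, V ⊆ U → @IsOpen Arr top V → @IsOpen Arr top (d '' V)

instance (G : EtaleGroupoid) : TopologicalSpace G.Arr := G.top

namespace EtaleGroupoid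

variable (G : EtaleGroupoid)

/-- The unit space `G⁽⁰⁾`, identified with the set of unit arrows. -/
def units : Set G.Arr := Set.range G.d

/-- A subset of the unit space is invariant if it is a union of orbits. -/
def Invariant (X : Set G.Arr) : Prop := ∀ g : G.Arr, G.d g ∈ X → G.r g ∈ X

/-- The orbit of a unit `x`. -/
def orbit (x : G.Arr) : Set G.Arr := {y | ∃ g, G.d g = x ∧ G.r g = y}

/-- `U` is an open subset of the unit space (open in the subspace topology). -/
def UnitsOpen (U : Set G.Arr) : Prop :=
  U ⊆ G.units ∧ IsOpen (Subtype.val ⁻¹' U : Set ↥G.units)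

/-- `C` is a closed subset of the unit space (closed in the subspace topology). -/
def UnitsClosed (C : Set G.Arr) : Prop :=
  C ⊆ G.units ∧ IsClosed (Subtype.val ⁻¹' C : Set ↥G.units)

/-- `X` is dense in the unit space. -/
def UnitsDense (X : Set G.Arr) : Prop :=
  Dense (Subtype.val ⁻¹' X : Set ↥G.units)

/-- `X` is nowhere dense in the unit space. -/
def UnitsNowhereDense (X : Set G.Arr) : Prop :=
  interior (closure (Subtype.val ⁻¹' X : Set ↥G.units)) = ∅

/-- Topological transitivity: every non-empty open invariant subset of the
unit space is dense. -/
def TopTransitive : Prop :=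
  ∀ U : Set G.Arr, G.UnitsOpen U → G.Invariant U → U.Nonempty → G.UnitsDense U

end EtaleGroupoid

namespace EtaleGroupoid

variable (G : EtaleGroupoid)

/-- The underlying set of the groupoid convolution algebra `RG`: the `R`-span of
characteristic functions of compact open subsets of the arrow space. -/
def AlgebraSet (R : Type) [CommRing R] : Set (G.Arr → R) :=
  (Submodule.span R {f : G.Arr → R | ∃ U : Set G.Arr,
      IsCompact U ∧ IsOpen U ∧ f = Set.indicator U fun _ => (1 : R)} :
    Submodule R (G.Arr → R))

/-- Convolution: `(f ⋆ g)(x) = ∑_{d h = d x} f (x h⁻¹) g (h)`. -/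
noncomputable def conv {R : Type} [CommRing R] (f g : G.Arr → R) : G.Arr → R := fun x =>
  ∑ᶠ (h : G.Arr) (_ : G.d h = G.d x), f (G.comp x (G.inv h)) * g h

/-- The convolution algebra `RG` is a prime ring (elementwise formulation). -/
def AlgPrime (R : Type) [CommRing R] : Prop :=
  (∃ f ∈ G.AlgebraSet R, f ≠ 0) ∧
  ∀ f ∈ G.AlgebraSet R, ∀ g ∈ G.AlgebraSet R,
    (∀ h ∈ G.AlgebraSet R, G.conv (G.conv f h) g = 0) → f = 0 ∨ g = 0

/-- The convolution algebra `RG` is a semiprime ring (elementwise formulation). -/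
def AlgSemiprime (R : Type) [CommRing R] : Prop :=
  ∀ f ∈ G.AlgebraSet R, (∀ h ∈ G.AlgebraSet R, G.conv (G.conv f h) f = 0) → f = 0

/-- `X ⊆ G⁽⁰⁾` is `R`-dense: every non-zero element of `RG` is non-zero at some
arrow whose domain lies in `X`. -/
def RDense (R : Type) [CommRing R] (X : Set G.Arr) : Prop :=
  ∀ f ∈ G.AlgebraSet R, f ≠ (0 : G.Arr → R) → ∃ g : G.Arr, f g ≠ 0 ∧ G.d g ∈ X

/-- An étale groupoid is ample if its unit space is (locally compact) Hausdorff
with a basis of compact open sets. -/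
def Ample : Prop :=
  T2Space ↥G.units ∧
  ∀ x ∈ G.units, ∀ U : Set G.Arr, G.UnitsOpen U → x ∈ U →
    ∃ K : Set G.Arr, K ⊆ U ∧ x ∈ K ∧ IsCompact K ∧ G.UnitsOpen K

/-- A groupoid is effective if the interior of the isotropy bundle is the unit
space. -/
def Effective : Prop := interior {g : G.Arr | G.d g = G.r g} = G.units

end EtaleGroupoid

namespace EtaleGroupoid

variable (G : EtaleGroupoid)

/-- The isotropy group of `G` at a unit `x`. -/
def IsoGrp (x : G.Arr) : Type _ := {g : G.Arr // G.d g = x ∧ G.r g = x}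

/-- The group structure on the isotropy group at a unit `x`. -/
def isoGroup (x : G.Arr) (hx : G.d x = x) : Group (G.IsoGrp x) where
  mul a b := ⟨G.comp a.1 b.1, by
    have hc : G.d a.1 = G.r b.1 := by rw [a.2.1, b.2.2]
    exact ⟨by rw [G.d_comp _ _ hc, b.2.1], by rw [G.r_comp _ _ hc, a.2.2]⟩⟩
  one := ⟨x, hx, by rw [← hx]; exact G.r_d x⟩
  inv a := ⟨G.inv a.1, by rw [G.d_inv, a.2.2], by rw [G.r_inv, a.2.1]⟩
  mul_assoc a b c := Subtype.ext (G.comp_assoc _ _ _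
    (by rw [a.2.1, b.2.2]) (by rw [b.2.1, c.2.2]))
  one_mul a := Subtype.ext (by
    have h := G.comp_unit_left a.1
    rw [a.2.2] at h
    exact h)
  mul_one a := Subtype.ext (by
    have h := G.comp_unit_right a.1
    rw [a.2.1] at h
    exact h)
  inv_mul_cancel a := Subtype.ext (by
    show G.comp (G.inv a.1) a.1 = x
    rw [G.inv_comp, a.2.1])

end EtaleGroupoid

section StmtAux

open Set

namespace EtaleGroupoid

variable {G : EtaleGroupoid}

/-! ### Groupoid identities -/

theorem cancel_right (p q : G.Arr) (h : G.d p = G.r q) :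
    G.comp (G.comp p q) (G.inv q) = p := by
  rw [G.comp_assoc p q (G.inv q) h (by rw [G.r_inv]), G.comp_inv, ← h, G.comp_unit_right]

theorem cancel_right' (p q : G.Arr) (h : G.d p = G.d q) :
    G.comp (G.comp p (G.inv q)) q = p := by
  rw [G.comp_assoc p (G.inv q) q (by rw [G.r_inv, h]) (by rw [G.d_inv]), G.inv_comp, ← h,
    G.comp_unit_right]

theorem inv_comp_rev (p q : G.Arr) (h : G.d p = G.r q) :
    G.inv (G.comp p q) = G.comp (G.inv q) (G.inv p) := by
  set a := G.comp p q with ha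
  have hda : G.d a = G.d q := G.d_comp p q h
  have hra : G.r a = G.r p := G.r_comp p q h
  have hp : p = G.comp a (G.inv q) := (cancel_right p q h).symm
  have h1 : G.comp (G.inv a) p = G.inv q := by
    rw [hp, ← G.comp_assoc (G.inv a) a (G.inv q) (by rw [G.d_inv]) (by rw [hda, G.r_inv]),
      G.inv_comp, hda, ← G.r_inv q, G.comp_unit_left]
  have h2 : G.comp (G.comp (G.inv a) p) (G.inv p) = G.inv a := by
    rw [G.comp_assoc (G.inv a) p (G.inv p) (by rw [G.d_inv, hra]) (by rw [G.r_inv]),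
      G.comp_inv, ← hra, ← G.d_inv a, G.comp_unit_right]
  rw [← h2, h1]

theorem collapse (p u v : G.Arr) (h1 : G.d p = G.r u) (h2 : G.r u = G.r v) :
    G.comp (G.comp p u) (G.comp (G.inv u) v) = G.comp p v := by
  have c1 : G.d u = G.r (G.comp (G.inv u) v) := by
    rw [G.r_comp _ _ (by rw [G.d_inv, h2]), G.r_inv]
  rw [G.comp_assoc p u _ h1 c1, ← G.comp_assoc u (G.inv u) v (by rw [G.r_inv])
      (by rw [G.d_inv, h2]), G.comp_inv, h2, G.comp_unit_left]

theorem comp_left_cancel (p q₁ q₂ : G.Arr) (h₁ : G.d p = G.r q₁) (h₂ : G.d p = G.r q₂)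
    (he : G.comp p q₁ = G.comp p q₂) : q₁ = q₂ := by
  have e : ∀ q, G.d p = G.r q → G.comp (G.inv p) (G.comp p q) = q := by
    intro q hq
    rw [← G.comp_assoc (G.inv p) p q (by rw [G.d_inv]) hq, G.inv_comp, hq, G.comp_unit_left]
  rw [← e q₁ h₁, ← e q₂ h₂, he]

end EtaleGroupoid

end StmtAux

section StmtAux2

open Set

namespace EtaleGroupoid

variable {G : EtaleGroupoid}

theorem mem_units_iff {g : G.Arr} : g ∈ G.units ↔ G.d g = g := by
  constructor
  · rintro ⟨y, rfl⟩; exact G.d_d y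
  · intro h; exact ⟨g, h⟩

theorem r_mem_units (g : G.Arr) : G.r g ∈ G.units := ⟨G.inv g, G.d_inv g⟩

theorem units_isOpen : IsOpen G.units := by
  rw [isOpen_iff_forall_mem_open]
  intro u hu
  obtain ⟨U, hUo, hgU, _, hop⟩ := G.etale u
  refine ⟨G.d '' U, ?_, hop U Subset.rfl hUo, ?_⟩
  · rintro z ⟨y, _, rfl⟩; exact ⟨y, rfl⟩
  · exact ⟨u, hgU, mem_units_iff.mp hu⟩

theorem unitsOpen_isOpen {U : Set G.Arr} (h : G.UnitsOpen U) : IsOpen U := by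
  have := units_isOpen.isOpenMap_subtype_val _ h.2
  rwa [Set.image_preimage_eq_inter_range, Subtype.range_coe,
    Set.inter_eq_self_of_subset_left h.1] at this

theorem compact_fiber {U : Set G.Arr} (hU : IsCompact U) (u : G.Arr) :
    {h : G.Arr | h ∈ U ∧ G.d h = u}.Finite := by
  classical
  have hch : ∀ a : G.Arr, ∃ V : Set G.Arr, IsOpen V ∧ a ∈ V ∧ Set.InjOn G.d V := by
    intro a
    obtain ⟨V, h1, h2, h3, _⟩ := G.etale a
    exact ⟨V, h1, h2, h3⟩
  choose V hVo hVm hVi using hch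
  obtain ⟨t, _, hcov⟩ := hU.elim_nhds_subcover V (fun a _ => (hVo a).mem_nhds (hVm a))
  have hsub : {h : G.Arr | h ∈ U ∧ G.d h = u} ⊆ ⋃ a ∈ t, {h : G.Arr | h ∈ V a ∧ G.d h = u} := by
    rintro h ⟨hhU, hhd⟩
    obtain ⟨a, hat, hha⟩ := Set.mem_iUnion₂.mp (hcov hhU)
    exact Set.mem_iUnion₂.mpr ⟨a, hat, hha, hhd⟩
  refine Set.Finite.subset (Set.Finite.biUnion t.finite_toSet fun a _ => ?_) hsub
  apply Set.Subsingleton.finite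
  rintro h₁ ⟨h₁V, h₁d⟩ h₂ ⟨h₂V, h₂d⟩
  exact hVi a h₁V h₂V (h₁d.trans h₂d.symm)

theorem algebra_compact_support {R : Type} [CommRing R] {f : G.Arr → R}
    (hf : f ∈ G.AlgebraSet R) : ∃ K : Set G.Arr, IsCompact K ∧ ∀ y, f y ≠ 0 → y ∈ K := by
  have hf' : f ∈ (Submodule.span R {f : G.Arr → R | ∃ U : Set G.Arr,
      IsCompact U ∧ IsOpen U ∧ f = Set.indicator U fun _ => (1 : R)} :
      Submodule R (G.Arr → R)) := hf
  clear hf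
  induction hf' using Submodule.span_induction with
  | mem f hmem =>
    obtain ⟨U, hUc, _, rfl⟩ := hmem
    exact ⟨U, hUc, fun y hy => by
      by_contra hyU
      exact hy (Set.indicator_of_notMem hyU _)⟩
  | zero => exact ⟨∅, isCompact_empty, fun y hy => (hy rfl).elim⟩
  | add f g _ _ hfK hgK =>
    obtain ⟨K₁, hK₁, h₁⟩ := hfK
    obtain ⟨K₂, hK₂, h₂⟩ := hgK
    refine ⟨K₁ ∪ K₂, hK₁.union hK₂, fun y hy => ?_⟩
    by_cases h : f y = 0
    · have : g y ≠ 0 := by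
        intro hg; apply hy; show f y + g y = 0; rw [h, hg, add_zero]
      exact Or.inr (h₂ y this)
    · exact Or.inl (h₁ y h)
  | smul a f _ hfK =>
    obtain ⟨K, hK, h₁⟩ := hfK
    refine ⟨K, hK, fun y hy => h₁ y ?_⟩
    intro h0
    apply hy
    show a * f y = 0
    rw [h0, mul_zero]

theorem algebra_fiber_finite {R : Type} [CommRing R] {f : G.Arr → R}
    (hf : f ∈ G.AlgebraSet R) (u : G.Arr) :
    {y : G.Arr | f y ≠ 0 ∧ G.d y = u}.Finite := by
  obtain ⟨K, hKc, hKs⟩ := algebra_compact_support hf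
  refine (compact_fiber hKc u).subset ?_
  rintro y ⟨hy1, hy2⟩
  exact ⟨hKs y hy1, hy2⟩

theorem exists_slice (ham : G.Ample) (w : G.Arr) (O : Set G.Arr) (hO : IsOpen O) (hw : w ∈ O) :
    ∃ W : Set G.Arr, IsCompact W ∧ IsOpen W ∧ Set.InjOn G.d W ∧ w ∈ W ∧ W ⊆ O := by
  classical
  obtain ⟨U, hUo, hwU, hinj, hmap⟩ := G.etale w
  set W' := U ∩ O with hW'
  have hW'o : IsOpen W' := hUo.inter hO
  have hwW' : w ∈ W' := ⟨hwU, hw⟩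
  have hW'U : W' ⊆ U := Set.inter_subset_left
  have hinj' : Set.InjOn G.d W' := hinj.mono hW'U
  have him : IsOpen (G.d '' W') := hmap W' hW'U hW'o
  have him_sub : G.d '' W' ⊆ G.units := by rintro z ⟨y, _, rfl⟩; exact ⟨y, rfl⟩
  have hdw_mem : G.d w ∈ G.d '' W' := ⟨w, hwW', rfl⟩
  have hdw_units : G.d w ∈ G.units := ⟨w, rfl⟩
  obtain ⟨K, hKsub, hKmem, hKcpt, hKopen⟩ := ham.2 (G.d w) hdw_units (G.d '' W')
    ⟨him_sub, him.preimage continuous_subtype_val⟩ hdw_mem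
  have hKopen' : IsOpen K := unitsOpen_isOpen hKopen
  set B := W' ∩ G.d ⁻¹' K with hB
  -- the section of d over d '' W'
  set σ : G.Arr → G.Arr := fun z => if h : z ∈ G.d '' W' then h.choose else w with hσ
  have hσ_spec : ∀ z ∈ G.d '' W', σ z ∈ W' ∧ G.d (σ z) = z := by
    intro z hz
    simp only [hσ, dif_pos hz]
    exact ⟨hz.choose_spec.1, hz.choose_spec.2⟩
  have hσ_cont : ContinuousOn σ (G.d '' W') := by
    rw [continuousOn_iff']
    intro t ht
    refine ⟨G.d '' (W' ∩ t), hmap _ (Set.inter_subset_left.trans hW'U) (hW'o.inter ht), ?_⟩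
    ext z
    constructor
    · rintro ⟨hzt, hz⟩
      obtain ⟨hσW, hσd⟩ := hσ_spec z hz
      exact ⟨⟨σ z, ⟨hσW, hzt⟩, hσd⟩, hz⟩
    · rintro ⟨⟨v, ⟨hvW, hvt⟩, rfl⟩, hz⟩
      obtain ⟨hσW, hσd⟩ := hσ_spec _ hz
      have : σ (G.d v) = v := hinj' hσW hvW hσd
      exact ⟨by show σ (G.d v) ∈ t; rw [this]; exact hvt, hz⟩
  have hBσ : B = σ '' K := by
    ext v
    constructor
    · rintro ⟨hvW, hvK⟩
      refine ⟨G.d v, hvK, ?_⟩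
      obtain ⟨hσW, hσd⟩ := hσ_spec (G.d v) ⟨v, hvW, rfl⟩
      exact hinj' hσW hvW hσd
    · rintro ⟨k, hkK, rfl⟩
      obtain ⟨hσW, hσd⟩ := hσ_spec k (hKsub hkK)
      exact ⟨hσW, by rw [Set.mem_preimage, hσd]; exact hkK⟩
  refine ⟨B, ?_, hW'o.inter (hKopen'.preimage G.continuous_d), hinj'.mono Set.inter_subset_left,
    ⟨hwW', hKmem⟩, fun v hv => hv.1.2⟩
  rw [hBσ]
  exact hKcpt.image_of_continuousOn (hσ_cont.mono hKsub)

end EtaleGroupoid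

end StmtAux2

section StmtAux3

open Set

namespace EtaleGroupoid

variable {G : EtaleGroupoid}

theorem conv_eval {R : Type} [CommRing R] (f g : G.Arr → R) (y : G.Arr) (F : Finset G.Arr)
    (hF : ∀ h ∈ F, G.d h = G.d y)
    (hsupp : ∀ h, G.d h = G.d y → f (G.comp y (G.inv h)) * g h ≠ 0 → h ∈ F) :
    G.conv f g y = ∑ h ∈ F, f (G.comp y (G.inv h)) * g h := by
  classical
  have e1 : G.conv f g y = ∑ᶠ h : G.Arr,
      if G.d h = G.d y then f (G.comp y (G.inv h)) * g h else 0 := by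
    show (∑ᶠ (h : G.Arr) (_ : G.d h = G.d y), f (G.comp y (G.inv h)) * g h) = _
    exact finsum_congr fun h => finsum_eq_if
  rw [e1, finsum_eq_finset_sum_of_support_subset _ ?_]
  · exact Finset.sum_congr rfl fun h hh => by rw [if_pos (hF h hh)]
  · intro h hh
    simp only [Function.mem_support] at hh
    by_cases hd : G.d h = G.d y
    · rw [if_pos hd] at hh
      exact hsupp h hd hh
    · rw [if_neg hd] at hh
      exact absurd rfl hh

theorem ma_mul_apply_right {R : Type} [CommRing R] {Γ : Type u} [Group Γ]
    (f h : MonoidAlgebra R Γ) (t : Γ) :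
    (f * h).coeff t = ∑ u ∈ h.coeff.support, f.coeff (t * u⁻¹) * h.coeff u := by
  classical
  rw [MonoidAlgebra.coeff_mul_apply_right]
  rfl

end EtaleGroupoid

end StmtAux3

section StmtAux4

namespace EtaleGroupoid

variable {G : EtaleGroupoid}

theorem key_identity (x α β γ δ e₀ e₂ e₃ : G.Arr)
    (hγ1 : G.d γ = x) (hγ2 : G.r γ = G.d α) (hδ1 : G.d δ = x) (hδ2 : G.r δ = G.d β)
    (h0d : G.d e₀ = x) (h0r : G.r e₀ = x) (h2d : G.d e₂ = x) (h2r : G.r e₂ = x)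
    (h3d : G.d e₃ = x) (h3r : G.r e₃ = x) :
    G.comp (G.comp (G.comp (G.comp (G.comp α γ) e₀) (G.inv δ))
        (G.inv (G.comp (G.comp (G.comp β δ) e₃) (G.inv δ))))
      (G.inv (G.comp (G.comp (G.comp γ e₂) (G.inv δ)) (G.inv β)))
    = G.comp (G.comp (G.comp α γ) (G.comp (G.comp e₀ (G.inv e₃)) (G.inv e₂))) (G.inv γ) := by
  set D := G.comp β δ with hD
  set C := G.comp γ e₂ with hC
  set P := G.comp (G.comp α γ) e₀ with hP
  have hdαγ : G.d (G.comp α γ) = x := by rw [G.d_comp α γ hγ2.symm, hγ1]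
  have hdD : G.d D = x := by rw [hD, G.d_comp β δ hδ2.symm, hδ1]
  have hrD : G.r D = G.r β := by rw [hD, G.r_comp β δ hδ2.symm]
  have hdC : G.d C = x := by rw [hC, G.d_comp γ e₂ (by rw [hγ1, h2r]), h2d]
  have hrC : G.r C = G.r γ := by rw [hC, G.r_comp γ e₂ (by rw [hγ1, h2r])]
  have hdP : G.d P = x := by rw [hP, G.d_comp _ e₀ (by rw [hdαγ, h0r]), h0d]
  set A := G.comp D e₃ with hA
  have hdA : G.d A = x := by rw [hA, G.d_comp D e₃ (by rw [hdD, h3r]), h3d]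
  have hrA : G.r A = G.r β := by rw [hA, G.r_comp D e₃ (by rw [hdD, h3r]), hrD]
  -- rewrite the middle inverse
  have hS : G.comp (G.comp (G.comp β δ) e₃) (G.inv δ) = G.comp A (G.inv δ) := rfl
  have step1 : G.inv (G.comp A (G.inv δ)) = G.comp (G.inv (G.inv δ)) (G.inv A) :=
    inv_comp_rev A (G.inv δ) (by rw [hdA, G.r_inv, hδ1])
  have hq : G.comp (G.comp (G.comp γ e₂) (G.inv δ)) (G.inv β) = G.comp C (G.inv D) := by
    show G.comp (G.comp C (G.inv δ)) (G.inv β) = G.comp C (G.inv D)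
    rw [G.comp_assoc C (G.inv δ) (G.inv β) (by rw [hdC, G.r_inv, hδ1])
        (by rw [G.d_inv, G.r_inv, hδ2]),
      ← inv_comp_rev β δ hδ2.symm]
  have step4 : G.inv (G.comp C (G.inv D)) = G.comp (G.inv (G.inv D)) (G.inv C) :=
    inv_comp_rev C (G.inv D) (by rw [hdC, G.r_inv, hdD])
  rw [hS, step1, hq, step4]
  -- collapse the δ pair
  have step2 : G.comp (G.comp P (G.inv δ)) (G.comp (G.inv (G.inv δ)) (G.inv A)) =
      G.comp P (G.inv A) :=
    collapse P (G.inv δ) (G.inv A) (by rw [hdP, G.r_inv, hδ1]) (by rw [G.r_inv, G.r_inv, hδ1, hdA])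
  rw [step2]
  -- split inv A
  have step3 : G.inv A = G.comp (G.inv e₃) (G.inv D) :=
    inv_comp_rev D e₃ (by rw [hdD, h3r])
  rw [step3]
  have step5a : G.comp P (G.comp (G.inv e₃) (G.inv D)) =
      G.comp (G.comp P (G.inv e₃)) (G.inv D) := by
    rw [← G.comp_assoc P (G.inv e₃) (G.inv D) (by rw [hdP, G.r_inv, h3d])
      (by rw [G.d_inv, G.r_inv, h3r, hdD])]
  rw [step5a]
  have step5 : G.comp (G.comp (G.comp P (G.inv e₃)) (G.inv D))
      (G.comp (G.inv (G.inv D)) (G.inv C)) = G.comp (G.comp P (G.inv e₃)) (G.inv C) :=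
    collapse (G.comp P (G.inv e₃)) (G.inv D) (G.inv C)
      (by rw [G.d_comp P (G.inv e₃) (by rw [hdP, G.r_inv, h3d]), G.d_inv, G.r_inv, h3r, hdD])
      (by rw [G.r_inv, G.r_inv, hdD, hdC])
  rw [step5]
  have step6 : G.inv C = G.comp (G.inv e₂) (G.inv γ) :=
    inv_comp_rev γ e₂ (by rw [hγ1, h2r])
  rw [step6]
  have step7 : G.comp (G.comp P (G.inv e₃)) (G.comp (G.inv e₂) (G.inv γ)) =
      G.comp (G.comp (G.comp P (G.inv e₃)) (G.inv e₂)) (G.inv γ) := by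
    rw [← G.comp_assoc (G.comp P (G.inv e₃)) (G.inv e₂) (G.inv γ)
      (by rw [G.d_comp P (G.inv e₃) (by rw [hdP, G.r_inv, h3d]), G.d_inv, G.r_inv, h3r, h2d])
      (by rw [G.d_inv, G.r_inv, h2r, hγ1])]
  rw [step7]
  have step8 : G.comp P (G.inv e₃) = G.comp (G.comp α γ) (G.comp e₀ (G.inv e₃)) := by
    rw [hP, G.comp_assoc (G.comp α γ) e₀ (G.inv e₃) (by rw [hdαγ, h0r])
      (by rw [h0d, G.r_inv, h3d])]
  rw [step8]
  have step9 : G.comp (G.comp (G.comp α γ) (G.comp e₀ (G.inv e₃))) (G.inv e₂) =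
      G.comp (G.comp α γ) (G.comp (G.comp e₀ (G.inv e₃)) (G.inv e₂)) := by
    rw [G.comp_assoc (G.comp α γ) (G.comp e₀ (G.inv e₃)) (G.inv e₂)
      (by rw [hdαγ, G.r_comp e₀ (G.inv e₃) (by rw [h0d, G.r_inv, h3d]), h0r])
      (by rw [G.d_comp e₀ (G.inv e₃) (by rw [h0d, G.r_inv, h3d]), G.d_inv, G.r_inv, h3r, h2d])]
  rw [step9]

theorem j_right (x β δ t : G.Arr) (hδ1 : G.d δ = x) (hδ2 : G.r δ = G.d β)
    (htd : G.d t = x) (htr : G.r t = x) :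
    G.comp (G.comp (G.comp (G.inv δ) (G.inv β))
      (G.comp (G.comp (G.comp β δ) t) (G.inv δ))) δ = t := by
  set D := G.comp β δ with hD
  have hdD : G.d D = x := by rw [hD, G.d_comp β δ hδ2.symm, hδ1]
  have hrD : G.r D = G.r β := by rw [hD, G.r_comp β δ hδ2.symm]
  have hDi : G.comp (G.inv δ) (G.inv β) = G.inv D := (inv_comp_rev β δ hδ2.symm).symm
  rw [hDi]
  have h1 : G.comp (G.inv D) (G.comp D t) = t := by
    rw [← G.comp_assoc (G.inv D) D t (by rw [G.d_inv]) (by rw [hdD, htr]), G.inv_comp, hdD,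
      ← htr, G.comp_unit_left]
  have h2 : G.comp (G.inv D) (G.comp (G.comp D t) (G.inv δ)) =
      G.comp (G.comp (G.inv D) (G.comp D t)) (G.inv δ) := by
    rw [← G.comp_assoc (G.inv D) (G.comp D t) (G.inv δ)
      (by rw [G.d_inv, G.r_comp D t (by rw [hdD, htr])])
      (by rw [G.d_comp D t (by rw [hdD, htr]), htd, G.r_inv, hδ1])]
  rw [h2, h1]
  exact cancel_right' t δ (by rw [htd, hδ1])

theorem j_left (x β δ s : G.Arr) (hδ1 : G.d δ = x) (hδ2 : G.r δ = G.d β)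
    (hsd : G.d s = G.d β) (hsr : G.r s = G.r β) :
    G.comp (G.comp (G.comp β δ)
      (G.comp (G.comp (G.comp (G.inv δ) (G.inv β)) s) δ)) (G.inv δ) = s := by
  set D := G.comp β δ with hD
  have hdD : G.d D = x := by rw [hD, G.d_comp β δ hδ2.symm, hδ1]
  have hrD : G.r D = G.r β := by rw [hD, G.r_comp β δ hδ2.symm]
  have hDi : G.comp (G.inv δ) (G.inv β) = G.inv D := (inv_comp_rev β δ hδ2.symm).symm
  rw [hDi]
  have h1 : G.comp D (G.comp (G.inv D) s) = s := by
    rw [← G.comp_assoc D (G.inv D) s (by rw [G.r_inv]) (by rw [G.d_inv, hrD, hsr]),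
      G.comp_inv, hrD, ← hsr, G.comp_unit_left]
  have h2 : G.comp D (G.comp (G.comp (G.inv D) s) δ) =
      G.comp (G.comp D (G.comp (G.inv D) s)) δ := by
    rw [← G.comp_assoc D (G.comp (G.inv D) s) δ
      (by rw [G.r_comp (G.inv D) s (by rw [G.d_inv, hrD, hsr]), G.r_inv])
      (by rw [G.d_comp (G.inv D) s (by rw [G.d_inv, hrD, hsr]), hsd, hδ2])]
  rw [h2, h1]
  exact cancel_right s δ (by rw [hsd, hδ2])

end EtaleGroupoid

end StmtAux4

/-- If an ample groupoid `G` has an `R`-dense orbit `O_x` whose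
isotropy group algebra `R G_x` is prime, then the convolution algebra `RG` is
prime. -/
theorem stmt10 (R : Type) [CommRing R] (G : EtaleGroupoid) (hample : G.Ample)
    (x : G.Arr) (hx : G.d x = x)
    (hdense : G.RDense R (G.orbit x))
    (hiso : letI := G.isoGroup x hx
      (∃ a : MonoidAlgebra R (G.IsoGrp x), a ≠ 0) ∧
      ∀ a b : MonoidAlgebra R (G.IsoGrp x),
        (∀ c : MonoidAlgebra R (G.IsoGrp x), a * c * b = 0) → a = 0 ∨ b = 0) :
    G.AlgPrime R := by
  classical
  letI := G.isoGroup x hx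
  obtain ⟨⟨a0, ha0⟩, hprime⟩ := hiso
  have h1R : (1 : R) ≠ 0 := by
    intro h10
    have hsub : Subsingleton R := subsingleton_of_zero_eq_one h10.symm
    haveI := hsub
    exact ha0 (Subsingleton.elim _ _)
  constructor
  · -- existence of a nonzero element of RG
    have hxu : x ∈ G.units := ⟨x, hx⟩
    have huo : G.UnitsOpen G.units := by
      refine ⟨Set.Subset.rfl, ?_⟩
      convert isOpen_univ
      ext z
      simp [z.2]
    obtain ⟨K, hKsub, hKmem, hKcpt, hKopen⟩ := hample.2 x hxu G.units huo hxu
    refine ⟨Set.indicator K (fun _ => (1:R)), ?_, ?_⟩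
    · exact Submodule.subset_span ⟨K, hKcpt, EtaleGroupoid.unitsOpen_isOpen hKopen, rfl⟩
    · intro h0
      have hz : Set.indicator K (fun _ => (1:R)) x = 0 := by rw [h0]; rfl
      rw [Set.indicator_of_mem hKmem] at hz
      exact h1R hz
  · intro f hf g hg hzero
    by_contra hcon
    push_neg at hcon
    obtain ⟨hf0, hg0⟩ := hcon
    obtain ⟨α, hαne, hαorb⟩ := hdense f hf hf0
    obtain ⟨γ, hγ1, hγ2⟩ := hαorb
    obtain ⟨β, hβne, hβorb⟩ := hdense g hg hg0
    obtain ⟨δ, hδ1, hδ2⟩ := hβorb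
    have hrx : G.r x = x := by rw [← hx, G.r_d, hx]
    have hdαγ : G.d (G.comp α γ) = x := by rw [G.d_comp α γ hγ2.symm, hγ1]
    have hdβδ : G.d (G.comp β δ) = x := by rw [G.d_comp β δ hδ2.symm, hδ1]
    -- translation maps into the isotropy fiber
    set φA : G.IsoGrp x → G.Arr :=
      fun t => G.comp (G.comp (G.comp α γ) t.1) (G.inv γ) with hφA
    set φB : G.IsoGrp x → G.Arr :=
      fun t => G.comp (G.comp (G.comp β δ) t.1) (G.inv δ) with hφB
    have hAt : ∀ t : G.IsoGrp x, G.d (G.comp (G.comp α γ) t.1) = x := fun t => by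
      rw [G.d_comp _ _ (by rw [hdαγ, t.2.2]), t.2.1]
    have hBt : ∀ t : G.IsoGrp x, G.d (G.comp (G.comp β δ) t.1) = x := fun t => by
      rw [G.d_comp _ _ (by rw [hdβδ, t.2.2]), t.2.1]
    have hφAd : ∀ t, G.d (φA t) = G.d α := fun t => by
      simp only [hφA]
      rw [G.d_comp _ _ (by rw [hAt t, G.r_inv, hγ1]), G.d_inv, hγ2]
    have hφBd : ∀ t, G.d (φB t) = G.d β := fun t => by
      simp only [hφB]
      rw [G.d_comp _ _ (by rw [hBt t, G.r_inv, hδ1]), G.d_inv, hδ2]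
    have hφBr : ∀ t, G.r (φB t) = G.r β := fun t => by
      simp only [hφB]
      rw [G.r_comp _ _ (by rw [hBt t, G.r_inv, hδ1]), G.r_comp _ _ (by rw [hdβδ, t.2.2]),
        G.r_comp β δ hδ2.symm]
    have hφA_inj : Function.Injective φA := by
      intro t₁ t₂ he
      simp only [hφA] at he
      have e1 := congrArg (fun z => G.comp z γ) he
      rw [EtaleGroupoid.cancel_right' _ γ (by rw [hAt t₁, hγ1]),
        EtaleGroupoid.cancel_right' _ γ (by rw [hAt t₂, hγ1])] at e1
      exact Subtype.ext (EtaleGroupoid.comp_left_cancel (G.comp α γ) t₁.1 t₂.1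
        (by rw [hdαγ, t₁.2.2]) (by rw [hdαγ, t₂.2.2]) e1)
    have hφB_inj : Function.Injective φB := by
      intro t₁ t₂ he
      simp only [hφB] at he
      have e1 := congrArg (fun z => G.comp z δ) he
      rw [EtaleGroupoid.cancel_right' _ δ (by rw [hBt t₁, hδ1]),
        EtaleGroupoid.cancel_right' _ δ (by rw [hBt t₂, hδ1])] at e1
      exact Subtype.ext (EtaleGroupoid.comp_left_cancel (G.comp β δ) t₁.1 t₂.1
        (by rw [hdβδ, t₁.2.2]) (by rw [hdβδ, t₂.2.2]) e1)
    have hρAfin : {t : G.IsoGrp x | f (φA t) ≠ 0}.Finite := by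
      have h1 := EtaleGroupoid.algebra_fiber_finite hf (G.d α)
      refine ((h1.preimage (Set.injOn_of_injective hφA_inj)).subset ?_)
      intro t ht
      exact ⟨ht, hφAd t⟩
    have hρBfin : {t : G.IsoGrp x | g (φB t) ≠ 0}.Finite := by
      have h1 := EtaleGroupoid.algebra_fiber_finite hg (G.d β)
      refine ((h1.preimage (Set.injOn_of_injective hφB_inj)).subset ?_)
      intro t ht
      exact ⟨ht, hφBd t⟩
    set ρA : MonoidAlgebra R (G.IsoGrp x) :=
      ⟨hρAfin.toFinset, fun t => f (φA t), fun t => by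
        rw [Set.Finite.mem_toFinset]; exact Iff.rfl⟩ with hρA
    set ρB : MonoidAlgebra R (G.IsoGrp x) :=
      ⟨hρBfin.toFinset, fun t => g (φB t), fun t => by
        rw [Set.Finite.mem_toFinset]; exact Iff.rfl⟩ with hρB
    have hρAval : ∀ t, ρA.coeff t = f (φA t) := fun t => rfl
    have hρBval : ∀ t, ρB.coeff t = g (φB t) := fun t => rfl
    have hone : (1 : G.IsoGrp x).1 = x := rfl
    have hρA1 : ρA.coeff 1 = f α := by
      rw [hρAval]
      congr 1
      simp only [hφA, hone]
      have e1 := G.comp_unit_right (G.comp α γ)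
      rw [hdαγ] at e1
      rw [e1]
      exact EtaleGroupoid.cancel_right α γ hγ2.symm
    have hρB1 : ρB.coeff 1 = g β := by
      rw [hρBval]
      congr 1
      simp only [hφB, hone]
      have e1 := G.comp_unit_right (G.comp β δ)
      rw [hdβδ] at e1
      rw [e1]
      exact EtaleGroupoid.cancel_right β δ hδ2.symm
    -- the main claim
    have claim : ∀ c : MonoidAlgebra R (G.IsoGrp x), ρA * c * ρB = 0 := by
      intro c
      -- finite fiber of g over d β, and the bad set of ranges
      have hFb : {s : G.Arr | g s ≠ 0 ∧ G.d s = G.d β}.Finite :=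
        EtaleGroupoid.algebra_fiber_finite hg (G.d β)
      set Bad : Set G.Arr := (G.r '' {s : G.Arr | g s ≠ 0 ∧ G.d s = G.d β}) \ {G.r β} with hBadDef
      have hBadfin : Bad.Finite := (hFb.image G.r).subset Set.diff_subset
      -- a separating open set O around r β
      have hsep : ∀ z : G.Arr, ∃ Oz : Set G.Arr, IsOpen Oz ∧ G.r β ∈ Oz ∧ (z ∈ Bad → z ∉ Oz) := by
        intro z
        by_cases hz : z ∈ Bad
        · have hzu : z ∈ G.units := by
            obtain ⟨⟨s, _, rfl⟩, _⟩ := hz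
            exact EtaleGroupoid.r_mem_units s
          have hzne : z ≠ G.r β := fun h => hz.2 (by rw [h]; rfl)
          haveI : T2Space ↥G.units := hample.1
          obtain ⟨U, V, hUo, hVo, hmU, hmV, hUV⟩ :=
            t2_separation (x := (⟨G.r β, EtaleGroupoid.r_mem_units β⟩ : ↥G.units))
              (y := ⟨z, hzu⟩) (fun h => hzne (congrArg Subtype.val h).symm)
          refine ⟨Subtype.val '' U, EtaleGroupoid.units_isOpen.isOpenMap_subtype_val U hUo,
            ⟨_, hmU, rfl⟩, ?_⟩
          rintro _ ⟨u', hu'U, hu'v⟩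
          have he : u' = ⟨z, hzu⟩ := Subtype.ext hu'v
          rw [he] at hu'U
          exact Set.disjoint_left.mp hUV hu'U hmV
        · exact ⟨Set.univ, isOpen_univ, trivial, fun h => absurd h hz⟩
      choose Oz hOzo hOzβ hOzz using hsep
      set O : Set G.Arr := ⋂ z ∈ hBadfin.toFinset, Oz z with hO
      have hOopen : IsOpen O := isOpen_biInter_finset fun z _ => hOzo z
      have hOβ : G.r β ∈ O := Set.mem_iInter₂.mpr fun z _ => hOzβ z
      have hOBad : ∀ z ∈ Bad, z ∉ O := by
        intro z hz hzo
        exact hOzz z hz (Set.mem_iInter₂.mp hzo z (hBadfin.mem_toFinset.mpr hz))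
      -- window arrows and window slices
      set wArr : G.IsoGrp x → G.Arr :=
        fun t => G.comp (G.comp (G.comp γ t.1) (G.inv δ)) (G.inv β) with hwArr
      have hdγt : ∀ t : G.IsoGrp x, G.d (G.comp γ t.1) = x := fun t => by
        rw [G.d_comp γ t.1 (by rw [hγ1, t.2.2]), t.2.1]
      have hdγtδ : ∀ t : G.IsoGrp x, G.d (G.comp (G.comp γ t.1) (G.inv δ)) = G.d β :=
        fun t => by
        rw [G.d_comp _ _ (by rw [hdγt t, G.r_inv, hδ1]), G.d_inv, hδ2]
      have hwd : ∀ t, G.d (wArr t) = G.r β := fun t => by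
        simp only [hwArr]
        rw [G.d_comp _ _ (by rw [hdγtδ t, G.r_inv]), G.d_inv]
      have hWex : ∀ t : G.IsoGrp x, ∃ W : Set G.Arr,
          IsCompact W ∧ IsOpen W ∧ Set.InjOn G.d W ∧ wArr t ∈ W ∧ W ⊆ G.d ⁻¹' O :=
        fun t => EtaleGroupoid.exists_slice hample (wArr t) (G.d ⁻¹' O)
          (hOopen.preimage G.continuous_d) (by rw [Set.mem_preimage, hwd t]; exact hOβ)
      choose W hWc hWo hWinj hWmem hWsub using hWex
      -- the middle element
      set m : G.Arr → R :=
        fun y => ∑ g₂ ∈ c.coeff.support, c.coeff g₂ * Set.indicator (W g₂) (fun _ => (1:R)) y with hm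
      have hmAlg : m ∈ G.AlgebraSet R := by
        have hme : m = ∑ g₂ ∈ c.coeff.support, c.coeff g₂ • Set.indicator (W g₂) (fun _ => (1:R)) := by
          funext y
          simp [hm, Finset.sum_apply]
        rw [hme]
        exact Submodule.sum_mem _ fun g₂ _ => Submodule.smul_mem _ _
          (Submodule.subset_span ⟨W g₂, hWc g₂, hWo g₂, rfl⟩)
      have h0 := hzero m hmAlg
      -- pointwise computation
      refine MonoidAlgebra.ext (Finsupp.ext fun g₀ => ?_)
      rw [MonoidAlgebra.coeff_zero, Finsupp.coe_zero, Pi.zero_apply]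
      set y₀ : G.Arr := G.comp (G.comp (G.comp α γ) g₀.1) (G.inv δ) with hy₀
      have hdy₀ : G.d y₀ = G.d β := by
        simp only [hy₀]
        rw [G.d_comp _ _ (by rw [hAt g₀, G.r_inv, hδ1]), G.d_inv, hδ2]
      have h0y : G.conv (G.conv f m) g y₀ = 0 := by rw [h0]; rfl
      -- outer evaluation of the double convolution
      have houter : G.conv (G.conv f m) g y₀ =
          ∑ s ∈ hFb.toFinset, G.conv f m (G.comp y₀ (G.inv s)) * g s := by
        refine EtaleGroupoid.conv_eval _ _ _ _ ?_ ?_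
        · intro h hh
          rw [hdy₀]
          exact (hFb.mem_toFinset.mp hh).2
        · intro h hd hne
          refine hFb.mem_toFinset.mpr ⟨?_, by rw [← hdy₀]; exact hd⟩
          intro hgz
          exact hne (by rw [hgz, mul_zero])
      -- inner evaluation
      have hinner : ∀ s, g s ≠ 0 → G.d s = G.d β →
          G.conv f m (G.comp y₀ (G.inv s)) =
          if G.r s = G.r β then
            ∑ g₂ ∈ c.coeff.support, f (G.comp (G.comp y₀ (G.inv s)) (G.inv (wArr g₂))) * c.coeff g₂
          else 0 := by
        intro s hgs hds
        have hys : G.d (G.comp y₀ (G.inv s)) = G.r s := by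
          rw [G.d_comp _ _ (by rw [hdy₀, G.r_inv, hds]), G.d_inv]
        have hmW : ∀ q : G.Arr, m q ≠ 0 → ∃ g₂ ∈ c.coeff.support, q ∈ W g₂ := by
          intro q hmq
          simp only [hm] at hmq
          obtain ⟨g₂, hg₂, hterm⟩ := Finset.exists_ne_zero_of_sum_ne_zero hmq
          refine ⟨g₂, hg₂, ?_⟩
          by_contra hqW
          rw [Set.indicator_of_notMem hqW, mul_zero] at hterm
          exact hterm rfl
        by_cases hrs : G.r s = G.r β
        · rw [if_pos hrs]
          rw [EtaleGroupoid.conv_eval f m (G.comp y₀ (G.inv s)) (c.coeff.support.image wArr) ?hF ?hsupp]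
          case hF =>
            intro q hq
            obtain ⟨g₂, _, rfl⟩ := Finset.mem_image.mp hq
            rw [hwd g₂, hys]
            exact hrs.symm
          case hsupp =>
            intro q hdq hne
            have hmq : m q ≠ 0 := fun h => hne (by rw [h, mul_zero])
            obtain ⟨g₂, hg₂, hqW⟩ := hmW q hmq
            have hq : q = wArr g₂ :=
              hWinj g₂ hqW (hWmem g₂) (by rw [hdq, hys, hrs, hwd g₂])
            rw [hq]
            exact Finset.mem_image_of_mem wArr hg₂
          simp only [hm]
          have e2 : ∀ q ∈ c.coeff.support.image wArr,
              f (G.comp (G.comp y₀ (G.inv s)) (G.inv q)) *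
                (∑ g₂ ∈ c.coeff.support, c.coeff g₂ * Set.indicator (W g₂) (fun _ => (1:R)) q)
              = ∑ g₂ ∈ c.coeff.support, f (G.comp (G.comp y₀ (G.inv s)) (G.inv q)) *
                  (c.coeff g₂ * Set.indicator (W g₂) (fun _ => (1:R)) q) :=
            fun q _ => Finset.mul_sum _ _ _
          rw [Finset.sum_congr rfl e2, Finset.sum_comm]
          apply Finset.sum_congr rfl
          intro g₂ hg₂
          rw [Finset.sum_eq_single_of_mem (wArr g₂) (Finset.mem_image_of_mem wArr hg₂) ?van]
          · rw [Set.indicator_of_mem (hWmem g₂), mul_one]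
          case van =>
            intro q hq hqne
            have hnW : q ∉ W g₂ := by
              intro hqW
              obtain ⟨g₂', _, rfl⟩ := Finset.mem_image.mp hq
              exact hqne (hWinj g₂ hqW (hWmem g₂) (by rw [hwd g₂', hwd g₂]))
            rw [Set.indicator_of_notMem hnW, mul_zero, mul_zero]
        · rw [if_neg hrs]
          rw [EtaleGroupoid.conv_eval f m (G.comp y₀ (G.inv s)) ∅ (by simp) ?hs, Finset.sum_empty]
          case hs =>
            intro q hdq hne
            exfalso
            have hmq : m q ≠ 0 := fun h => hne (by rw [h, mul_zero])
            obtain ⟨g₂, hg₂, hqW⟩ := hmW q hmq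
            have hdqO : G.d q ∈ O := hWsub g₂ hqW
            have hrsBad : G.r s ∈ Bad := ⟨⟨s, ⟨hgs, hds⟩, rfl⟩, by simpa using hrs⟩
            rw [hdq, hys] at hdqO
            exact hOBad (G.r s) hrsBad hdqO
      -- restrict the fiber sum to the isotropy part
      have hstep : ∑ s ∈ hFb.toFinset, G.conv f m (G.comp y₀ (G.inv s)) * g s =
          ∑ s ∈ hFb.toFinset.filter (fun s => G.r s = G.r β),
            (∑ g₂ ∈ c.coeff.support,
              f (G.comp (G.comp y₀ (G.inv s)) (G.inv (wArr g₂))) * c.coeff g₂) * g s := by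
        refine Eq.trans (Finset.sum_filter_of_ne ?side).symm (Finset.sum_congr rfl ?terms)
        case side =>
          intro s hsF hne
          obtain ⟨hgs, hds⟩ := hFb.mem_toFinset.mp hsF
          by_contra hrs
          rw [hinner s hgs hds, if_neg hrs, zero_mul] at hne
          exact hne rfl
        case terms =>
          intro s hsf
          obtain ⟨hsF, hrs⟩ := Finset.mem_filter.mp hsf
          obtain ⟨hgs, hds⟩ := hFb.mem_toFinset.mp hsF
          rw [hinner s hgs hds, if_pos hrs]
      -- the inverse reindexing map
      set jArr : G.Arr → G.Arr :=
        fun s => G.comp (G.comp (G.comp (G.inv δ) (G.inv β)) s) δ with hjArr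
      have hjiso : ∀ s : G.Arr, G.d s = G.d β → G.r s = G.r β →
          G.d (jArr s) = x ∧ G.r (jArr s) = x := by
        intro s hsd hsr
        have hc1 : G.d (G.inv δ) = G.r (G.inv β) := by rw [G.d_inv, G.r_inv, hδ2]
        have hc2 : G.d (G.comp (G.inv δ) (G.inv β)) = G.r s := by
          rw [G.d_comp _ _ hc1, G.d_inv, hsr]
        have hc3 : G.d (G.comp (G.comp (G.inv δ) (G.inv β)) s) = G.r δ := by
          rw [G.d_comp _ _ hc2, hsd, hδ2]
        constructor
        · simp only [hjArr]
          rw [G.d_comp _ _ hc3, hδ1]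
        · simp only [hjArr]
          rw [G.r_comp _ _ hc3, G.r_comp _ _ hc2, G.r_comp _ _ hc1, G.r_inv, hδ1]
      set jmap : G.Arr → G.IsoGrp x := fun s =>
        if h : G.d s = G.d β ∧ G.r s = G.r β then ⟨jArr s, hjiso s h.1 h.2⟩ else 1 with hjmap
      have hjval : ∀ s, G.d s = G.d β → G.r s = G.r β → (jmap s).1 = jArr s := by
        intro s h1 h2
        have hj : jmap s = ⟨jArr s, hjiso s h1 h2⟩ := dif_pos (And.intro h1 h2)
        rw [hj]
      have hjmapB : ∀ s, G.d s = G.d β → G.r s = G.r β → φB (jmap s) = s := by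
        intro s h1 h2
        simp only [hφB]
        rw [hjval s h1 h2]
        simp only [hjArr]
        exact EtaleGroupoid.j_left x β δ s hδ1 hδ2 h1 h2
      have hjmapB' : ∀ t : G.IsoGrp x, jmap (φB t) = t := by
        intro t
        refine Subtype.ext ?_
        rw [hjval (φB t) (hφBd t) (hφBr t)]
        simp only [hjArr, hφB]
        exact EtaleGroupoid.j_right x β δ t.1 hδ1 hδ2 t.2.1 t.2.2
      have hKEY : ∀ (t₂ t₃ : G.IsoGrp x),
          f (G.comp (G.comp y₀ (G.inv (φB t₃))) (G.inv (wArr t₂))) =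
            ρA.coeff (g₀ * t₃⁻¹ * t₂⁻¹) := by
        intro t₂ t₃
        rw [hρAval]
        congr 1
        have hval : ((g₀ * t₃⁻¹ * t₂⁻¹ : G.IsoGrp x)).1 =
            G.comp (G.comp g₀.1 (G.inv t₃.1)) (G.inv t₂.1) := rfl
        simp only [hφA, hφB, hwArr, hy₀, hval]
        exact EtaleGroupoid.key_identity x α β γ δ g₀.1 t₂.1 t₃.1 hγ1 hγ2 hδ1 hδ2
          g₀.2.1 g₀.2.2 t₂.2.1 t₂.2.2 t₃.2.1 t₃.2.2
      -- the group algebra side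
      have halg : (ρA * c * ρB).coeff g₀ =
          ∑ g₃ ∈ ρB.coeff.support, (∑ g₂ ∈ c.coeff.support, ρA.coeff (g₀ * g₃⁻¹ * g₂⁻¹) * c.coeff g₂) * ρB.coeff g₃ := by
        rw [EtaleGroupoid.ma_mul_apply_right (ρA * c) ρB g₀]
        exact Finset.sum_congr rfl fun g₃ _ => by
          rw [EtaleGroupoid.ma_mul_apply_right ρA c (g₀ * g₃⁻¹)]
      -- reindex the convolution sum
      have hbij : ∑ s ∈ hFb.toFinset.filter (fun s => G.r s = G.r β),
            (∑ g₂ ∈ c.coeff.support,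
              f (G.comp (G.comp y₀ (G.inv s)) (G.inv (wArr g₂))) * c.coeff g₂) * g s
          = ∑ g₃ ∈ ρB.coeff.support,
            (∑ g₂ ∈ c.coeff.support, ρA.coeff (g₀ * g₃⁻¹ * g₂⁻¹) * c.coeff g₂) * ρB.coeff g₃ := by
        refine Finset.sum_nbij' jmap (fun g₃ => φB g₃) ?hi ?hj ?bleft ?bright ?hterm
        case hi =>
          intro s hsf
          obtain ⟨hsF, hrs⟩ := Finset.mem_filter.mp hsf
          obtain ⟨hgs, hds⟩ := hFb.mem_toFinset.mp hsF
          rw [Finsupp.mem_support_iff, hρBval, hjmapB s hds hrs]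
          exact hgs
        case hj =>
          intro g₃ hg₃
          refine Finset.mem_filter.mpr ⟨hFb.mem_toFinset.mpr ⟨?_, hφBd g₃⟩, hφBr g₃⟩
          rw [← hρBval]
          exact Finsupp.mem_support_iff.mp hg₃
        case bleft =>
          intro s hsf
          obtain ⟨hsF, hrs⟩ := Finset.mem_filter.mp hsf
          obtain ⟨hgs, hds⟩ := hFb.mem_toFinset.mp hsF
          exact hjmapB s hds hrs
        case bright =>
          intro g₃ _
          exact hjmapB' g₃
        case hterm =>
          intro s hsf
          obtain ⟨hsF, hrs⟩ := Finset.mem_filter.mp hsf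
          obtain ⟨hgs, hds⟩ := hFb.mem_toFinset.mp hsF
          have hjs : φB (jmap s) = s := hjmapB s hds hrs
          rw [hρBval (jmap s), hjs]
          congr 1
          refine Finset.sum_congr rfl fun g₂ _ => ?_
          congr 1
          conv_lhs => rw [← hjs]
          exact hKEY g₂ (jmap s)
      rw [halg, ← hbij, ← hstep, ← houter, h0y]


    rcases hprime ρA ρB claim with h | h
    · rw [h] at hρA1
      exact hαne (by rw [← hρA1]; rfl)
    · rw [h] at hρB1
      exact hβne (by rw [← hρB1]; rfl)
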